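/- End-point property of the derivative at the right end-point: for every natural number n ≥ 1, real parameters α, β with 0 ≤ α ≤ β, and control points P_0, …, P_n in ℝ^d (or any real normed vector space), the Bézier curve P(t) = ∑_{k=0}^{n} P_k · G_{n,α,β}^k(t) satisfies P′((n+α)/(n+β)) = (n+β) · (P_n − P_{n−1}); in particular the curve is tangent to the last edge of its control polygon at the right end-point. -/

import Mathlib

/-- Bernstein functions with shifted knots of degree `n`:
`G_{n,α,β}^k(t) = C(n,k) ((n+β)/n)^n (t - α/(n+β))^k ((n+α)/(n+β) - t)^(n-k)`. -/
noncomputable def G (n : ℕ) (α β : ℝ) (k : ℕ) (t : ℝ) : ℝ :=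
  (n.choose k : ℝ) * ((n + β) / n) ^ n * (t - α / (n + β)) ^ k *
    ((n + α) / (n + β) - t) ^ (n - k)

lemma hasDerivAt_G (n k : ℕ) (α β t : ℝ) :
    HasDerivAt (G n α β k)
      (((n.choose k : ℝ) * ((n + β) / n) ^ n) *
        ((↑k * (t - α / (n + β)) ^ (k - 1) * 1) * ((n + α) / (n + β) - t) ^ (n - k)
          + (t - α / (n + β)) ^ k *
            (↑(n - k) * ((n + α) / (n + β) - t) ^ (n - k - 1) * (-1)))) t := by
  have h1 : HasDerivAt (fun s : ℝ => (s - α / (n + β)) ^ k)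
      (↑k * (t - α / (n + β)) ^ (k - 1) * 1) t :=
    ((hasDerivAt_id t).sub_const _).pow k
  have h2 : HasDerivAt (fun s : ℝ => ((n + α) / (n + β) - s) ^ (n - k))
      (↑(n - k) * ((n + α) / (n + β) - t) ^ (n - k - 1) * (-1)) t :=
    ((hasDerivAt_id t).const_sub _).pow (n - k)
  have h := (h1.mul h2).const_mul ((n.choose k : ℝ) * ((n + β) / n) ^ n)
  have hfun : G n α β k = fun s =>
      ((n.choose k : ℝ) * ((n + β) / n) ^ n) *
        ((s - α / (n + β)) ^ k * ((n + α) / (n + β) - s) ^ (n - k)) := by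
    funext s; simp [G, mul_assoc]
  rw [hfun]
  exact h

lemma aux_pow (x y : ℝ) (hx : x ≠ 0) (hy : y ≠ 0) (m : ℕ) :
    (y / x) ^ (m + 1) * (x / y) ^ m * x = y := by
  have h1 : (y / x) ^ m * (x / y) ^ m = 1 := by
    rw [← mul_pow, div_mul_div_comm, mul_comm x y, div_self (mul_ne_zero hy hx), one_pow]
  calc (y / x) ^ (m + 1) * (x / y) ^ m * x
      = ((y / x) ^ m * (x / y) ^ m) * (y / x * x) := by ring
    _ = y := by rw [h1, one_mul, div_mul_cancel₀ _ hx]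

/-- End-point property of the derivative at the right end-point: the Bézier curve
with shifted knots is tangent to the last edge of its control polygon. -/
theorem bezier_deriv_right (n : ℕ) (hn : 1 ≤ n) (α β : ℝ) (hα : 0 ≤ α) (hαβ : α ≤ β)
    {E : Type*} [NormedAddCommGroup E] [NormedSpace ℝ E] (P : ℕ → E) :
    HasDerivAt (fun s => ∑ k ∈ Finset.range (n + 1), G n α β k s • P k)
      (((n : ℝ) + β) • (P n - P (n - 1))) ((n + α) / (n + β)) := by
  have hn0 : (0:ℝ) < n := by exact_mod_cast Nat.lt_of_lt_of_le Nat.zero_lt_one hn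
  have hβ0 : (0:ℝ) ≤ β := le_trans hα hαβ
  have hnβ : (0:ℝ) < (n:ℝ) + β := by linarith
  set t₀ : ℝ := ((n:ℝ) + α) / ((n:ℝ) + β) with ht₀
  set d : ℕ → ℝ := fun k => if k = n then ((n:ℝ) + β) else if k = n - 1 then -((n:ℝ) + β) else 0
    with hd
  have hsub : t₀ - α / ((n:ℝ) + β) = (n:ℝ) / ((n:ℝ) + β) := by
    rw [ht₀, div_sub_div_same]; ring_nf
  have hkey : (((n:ℝ) + β) / n) ^ n * ((n:ℝ) / ((n:ℝ) + β)) ^ (n - 1) * (n:ℝ)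
      = (n:ℝ) + β := by
    obtain ⟨m, rfl⟩ : ∃ m, n = m + 1 := ⟨n - 1, by omega⟩
    rw [Nat.add_sub_cancel]
    exact aux_pow _ _ hn0.ne' hnβ.ne' m
  have hderiv : ∀ k ∈ Finset.range (n + 1),
      HasDerivAt (fun s => G n α β k s • P k) (d k • P k) t₀ := by
    intro k hk
    have hk' : k < n + 1 := Finset.mem_range.mp hk
    have h := (hasDerivAt_G n k α β t₀).smul_const (P k)
    convert h using 2
    rw [hsub, sub_self]
    rcases eq_or_ne k n with rfl | hkn
    · have hdval : d k = (k:ℝ) + β := by simp [hd]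
      rw [hdval, Nat.choose_self, Nat.sub_self]
      norm_num
      linear_combination -hkey
    · rcases eq_or_ne k (n - 1) with rfl | hkn1
      · have h1 : n - (n - 1) = 1 := by omega
        have hch : (n.choose (n - 1) : ℝ) = n := by
          rw [Nat.choose_symm hn, Nat.choose_one_right]
        have hdval : d (n - 1) = -((n:ℝ) + β) := by simp [hd, hkn]
        rw [hdval, h1, hch]
        norm_num
        linear_combination hkey
      · have h1 : n - k ≠ 0 := by omega
        have h2 : n - k - 1 ≠ 0 := by omega
        have hdval : d k = 0 := by simp [hd, hkn, hkn1]
        rw [hdval, zero_pow h1, zero_pow h2]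
        ring
  have hsum := HasDerivAt.sum hderiv
  have hne : n - 1 ≠ n := by omega
  have hEq : ∑ k ∈ Finset.range (n + 1), d k • P k = (((n:ℝ) + β)) • (P n - P (n - 1)) := by
    have hss : ({n - 1, n} : Finset ℕ) ⊆ Finset.range (n + 1) := by
      intro x hx
      simp only [Finset.mem_insert, Finset.mem_singleton] at hx
      rcases hx with rfl | rfl <;> simp [Nat.lt_succ_iff]
    rw [← Finset.sum_subset hss]
    · rw [Finset.sum_pair hne]
      have hd1 : d (n - 1) = -((n:ℝ) + β) := by simp [hd, hne]
      have hd2 : d n = (n:ℝ) + β := by simp [hd]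
      rw [hd1, hd2, smul_sub]
      module
    · intro x hx hnx
      simp only [Finset.mem_insert, Finset.mem_singleton, not_or] at hnx
      have : d x = 0 := by simp [hd, hnx.1, hnx.2]
      rw [this, zero_smul]
  rw [← hEq]
  convert hsum using 1
  ext s
  rw [Finset.sum_apply]
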